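/- If W ∈ ℝ^{2ⁿ} is in the eigenspace of eigenvalue 1 of K^{[n]}, then for every integer t with 0 ≤ t ≤ n, the t-th derivative W_{<t>} ∈ ℝ^{2^{n−t}} is in the eigenspace of eigenvalue 1 of K^{[n−t]}. -/

import Mathlib

open Matrix Finset

noncomputable def Kbit : Matrix (ZMod 2) (ZMod 2) ℝ :=
  fun a b => (1 / Real.sqrt 2) * (if a = 1 ∧ b = 1 then -1 else 1)

/-- m-th Kronecker power of K = (1/√2)[[1,1],[1,-1]], indexed by F₂^m
(K^{[0]} is the 1×1 identity). -/
noncomputable def Kpow (m : ℕ) : Matrix (Fin m → ZMod 2) (Fin m → ZMod 2) ℝ :=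
  fun u v => ∏ i, Kbit (u i) (v i)

noncomputable def rho : ℝ := Real.sqrt 2 - 1

def wt {n : ℕ} (v : Fin n → ZMod 2) : ℕ := (univ.filter fun i => v i = 1).card

/-- W_{<t>}[v] = Σ_{u ∈ F₂ᵗ} ρ^{wt(u)} W[uv]. -/
noncomputable def wDeriv (t m : ℕ) (W : (Fin (t + m) → ZMod 2) → ℝ) :
    (Fin m → ZMod 2) → ℝ :=
  fun v => ∑ u : Fin t → ZMod 2, rho ^ wt u * W (Fin.append u v)

lemma rho_pow_wt {n : ℕ} (u : Fin n → ZMod 2) :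
    rho ^ wt u = ∏ i, (if u i = 1 then rho else 1) := by
  rw [wt, ← Finset.prod_const, Finset.prod_filter]

lemma Kbit_rho (b : ZMod 2) :
    ∑ a : ZMod 2, Kbit b a * (if a = 1 then rho else 1) = if b = 1 then rho else 1 := by
  have h2 : Real.sqrt 2 ≠ 0 := by positivity
  have hsq : Real.sqrt 2 * Real.sqrt 2 = 2 := Real.mul_self_sqrt (by norm_num)
  have hsum : ∀ f : ZMod 2 → ℝ, ∑ a, f a = f 0 + f 1 := by
    intro f
    rw [show (univ : Finset (ZMod 2)) = {0, 1} by decide]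
    simp
  rw [hsum]
  obtain rfl | rfl : b = 0 ∨ b = 1 := by revert b; decide
  all_goals simp [Kbit, rho] <;> field_simp <;> nlinarith [hsq]

lemma key (n : ℕ) (u' : Fin n → ZMod 2) :
    ∑ u : Fin n → ZMod 2, Kpow n u' u * rho ^ wt u = rho ^ wt u' := by
  have : ∀ u : Fin n → ZMod 2, Kpow n u' u * rho ^ wt u
      = ∏ i, (Kbit (u' i) (u i) * (if u i = 1 then rho else 1)) := by
    intro u
    rw [Kpow, rho_pow_wt, ← Finset.prod_mul_distrib]
  simp only [this]
  rw [rho_pow_wt]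
  have h := Finset.prod_univ_sum (fun _ : Fin n => (univ : Finset (ZMod 2)))
    (fun i a => Kbit (u' i) a * if a = 1 then rho else 1)
  rw [Fintype.piFinset_univ] at h
  rw [← h]
  exact Finset.prod_congr rfl fun i _ => Kbit_rho (u' i)

lemma Kpow_append {t m : ℕ} (u u' : Fin t → ZMod 2) (v v' : Fin m → ZMod 2) :
    Kpow (t + m) (Fin.append u v) (Fin.append u' v') = Kpow t u u' * Kpow m v v' := by
  rw [Kpow, Fin.prod_univ_add]
  simp [Kpow, Fin.append_left, Fin.append_right]

/-- If W ∈ ℝ^{2ⁿ} is in the eigenspace of 1 of K^{[n]} (n = t+m, so 0 ≤ t ≤ n),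
then the t-th derivative W_{<t>} is in the eigenspace of 1 of K^{[n−t]}. -/
theorem stmt_14 (t m : ℕ) (W : (Fin (t + m) → ZMod 2) → ℝ)
    (hW : vecMul W (Kpow (t + m)) = W) :
    vecMul (wDeriv t m W) (Kpow m) = wDeriv t m W := by
  funext v'
  have hWpt : ∀ x, W x = ∑ w, W w * Kpow (t + m) w x := by
    intro x
    conv_lhs => rw [← hW]
    simp [vecMul, dotProduct]
  simp only [vecMul, dotProduct, wDeriv]
  calc ∑ v, (∑ u : Fin t → ZMod 2, rho ^ wt u * W (Fin.append u v)) * Kpow m v v'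
      = ∑ v, ∑ u' : Fin t → ZMod 2, rho ^ wt u' * Kpow m v v' * W (Fin.append u' v) := by
        refine Finset.sum_congr rfl fun v _ => ?_
        rw [Finset.sum_mul]
        exact Finset.sum_congr rfl fun u _ => by ring
    _ = ∑ u : Fin t → ZMod 2, rho ^ wt u * W (Fin.append u v') := by
        symm
        calc ∑ u : Fin t → ZMod 2, rho ^ wt u * W (Fin.append u v')
            = ∑ u : Fin t → ZMod 2, rho ^ wt u *
                ∑ w, W w * Kpow (t + m) w (Fin.append u v') := by
              refine Finset.sum_congr rfl fun u _ => ?_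
              congr 1
              exact hWpt (Fin.append u v')
          _ = ∑ u : Fin t → ZMod 2, rho ^ wt u *
                ∑ p : (Fin t → ZMod 2) × (Fin m → ZMod 2),
                  W (Fin.append p.1 p.2) * Kpow (t + m) (Fin.append p.1 p.2) (Fin.append u v') := by
              refine Finset.sum_congr rfl fun u _ => ?_
              congr 1
              exact (Fintype.sum_equiv (Fin.appendEquiv t m) _ _ (fun p => rfl)).symm
          _ = ∑ v, ∑ u' : Fin t → ZMod 2, rho ^ wt u' * Kpow m v v' * W (Fin.append u' v) := by
              simp only [Kpow_append, Fintype.sum_prod_type, Finset.mul_sum]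
              refine (Finset.sum_comm.trans
                (Finset.sum_congr rfl fun u' _ => Finset.sum_comm)).trans ?_
              refine Eq.trans ?_ Finset.sum_comm
              refine Finset.sum_congr rfl fun u' _ => ?_
              refine Finset.sum_congr rfl fun v _ => ?_
              have : ∑ u : Fin t → ZMod 2, Kpow t u' u * rho ^ wt u = rho ^ wt u' := key t u'
              calc ∑ u : Fin t → ZMod 2, rho ^ wt u *
                      (W (Fin.append u' v) * (Kpow t u' u * Kpow m v v'))
                  = (∑ u : Fin t → ZMod 2, Kpow t u' u * rho ^ wt u) *
                      (W (Fin.append u' v) * Kpow m v v') := by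
                    rw [Finset.sum_mul]
                    exact Finset.sum_congr rfl fun u _ => by ring
                _ = rho ^ wt u' * Kpow m v v' * W (Fin.append u' v) := by rw [this]; ring
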